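/- Let τ be an end tangle of S in a graph G and set K = ⋂{B : (A,B) ∈ τ}. If K is finite, then τ is not closed in the separation topology: the separation (V,K) does not lie in τ, yet for every finite Z ⊆ V there is (A',B') ∈ τ inducing the same separation on Z as (V,K). -/

import Mathlib

open Set

universe u

/-- A separation of a graph `G`: a pair of vertex sets covering `V` with no
edge between `A \ B` and `B \ A`. -/
structure Separation {V : Type u} (G : SimpleGraph V) where
  A : Set V
  B : Set V
  union_eq : A ∪ B = Set.univ
  no_edge : ∀ a ∈ A \ B, ∀ b ∈ B \ A, ¬ G.Adj a b

/-- The oriented separations of finite order. -/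
abbrev FinSep {V : Type u} (G : SimpleGraph V) := {s : Separation G // (s.A ∩ s.B).Finite}

/-- The separation topology: basic open sets prescribe the restriction of a
separation to a finite vertex set `Z`. -/
instance sepTop {V : Type u} (G : SimpleGraph V) : TopologicalSpace (FinSep G) :=
  TopologicalSpace.generateFrom
    {O | ∃ Z AZ BZ : Set V, Z.Finite ∧
      O = {s : FinSep G | s.1.A ∩ Z = AZ ∧ s.1.B ∩ Z = BZ}}

/-- The reverse orientation of a finite-order separation. -/
def FinSep.rev {V : Type u} {G : SimpleGraph V} (s : FinSep G) : FinSep G :=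
  ⟨⟨s.1.B, s.1.A, by rw [Set.union_comm]; exact s.1.union_eq,
    fun a ha b hb h => s.1.no_edge b hb a ha h.symm⟩,
   by rw [Set.inter_comm]; exact s.2⟩

/-- A ray in a graph: an injective sequence of successively adjacent vertices. -/
structure GraphRay {V : Type u} (G : SimpleGraph V) where
  f : ℕ → V
  inj : Function.Injective f
  adj : ∀ n, G.Adj (f n) (f (n + 1))

/-- Two rays are equivalent if no finite vertex set separates them. -/
def RayEquiv {V : Type u} (G : SimpleGraph V) (R R' : GraphRay G) : Prop :=
  ∀ F : Set V, F.Finite →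
    ∃ (m n : ℕ) (w : G.Walk (R.f m) (R'.f n)), ∀ x ∈ w.support, x ∉ F

/-- An end of a graph: a (nonempty) equivalence class of rays. -/
structure GraphEnd {V : Type u} (G : SimpleGraph V) where
  rays : Set (GraphRay G)
  nonempty : rays.Nonempty
  mem_iff : ∀ R ∈ rays, ∀ R', R' ∈ rays ↔ RayEquiv G R R'

/-- A ray has a tail in `B`. -/
def HasTailIn {V : Type u} {G : SimpleGraph V} (R : GraphRay G) (B : Set V) : Prop :=
  ∃ N, ∀ n ≥ N, R.f n ∈ B

/-- The end tangle induced by the end `ω`: all finite-order separations `(A,B)`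
such that every ray of `ω` has a tail in `B`. -/
def endTangle {V : Type u} {G : SimpleGraph V} (ω : GraphEnd G) : Set (FinSep G) :=
  {s | ∀ R ∈ ω.rays, HasTailIn R s.1.B}

/-- `v` dominates the end `ω`: `v` sends infinitely many paths to a ray of `ω`
which pairwise meet only in `v`. -/
def Dominates {V : Type u} (G : SimpleGraph V) (v : V) (ω : GraphEnd G) : Prop :=
  ∃ R ∈ ω.rays, ∃ p : ℕ → (n : ℕ) × G.Walk v (R.f n),
    (∀ i, (p i).2.IsPath) ∧ (Function.Injective fun i => (p i).1) ∧
    ∀ i j, i ≠ j → ∀ x, x ∈ (p i).2.support → x ∈ (p j).2.support → x = v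

/-- The end `ω` has (vertex) degree at least `m`: there are `m` pairwise
disjoint rays belonging to `ω`. -/
def DegGE {V : Type u} (G : SimpleGraph V) (ω : GraphEnd G) (m : ℕ) : Prop :=
  ∃ R : Fin m → GraphRay G, (∀ i, R i ∈ ω.rays) ∧
    ∀ i j, i ≠ j → Disjoint (Set.range (R i).f) (Set.range (R j).f)

/-- At least `n` vertices dominate `ω`. -/
def DomGE {V : Type u} (G : SimpleGraph V) (ω : GraphEnd G) (n : ℕ) : Prop :=
  ∃ D : Finset V, D.card = n ∧ ∀ v ∈ D, Dominates G v ω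

/-- `deg(ω) + dom(ω) ≥ k`. -/
def DegDomGE {V : Type u} (G : SimpleGraph V) (ω : GraphEnd G) (k : ℕ) : Prop :=
  ∃ m n, m + n = k ∧ DegGE G ω m ∧ DomGE G ω n

/-- `T` separates `X` from the end `ω`: every ray of `ω` meeting `X` meets `T`. -/
def SeparatesFromEnd {V : Type u} (G : SimpleGraph V) (X T : Set V) (ω : GraphEnd G) : Prop :=
  ∀ R ∈ ω.rays, (∃ n, R.f n ∈ X) → ∃ n, R.f n ∈ T

/-- `K` is `(<ℵ₀)`-inseparable (apart from the infiniteness requirement): no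
finite-order separation separates two of its vertices. -/
def FinInseparable {V : Type u} (G : SimpleGraph V) (K : Set V) : Prop :=
  ∀ s : FinSep G, ∀ x ∈ K, ∀ y ∈ K, ¬(x ∈ s.1.A \ s.1.B ∧ y ∈ s.1.B \ s.1.A)

/-- An `ℵ₀`-block: a maximal infinite set of vertices no two of which can be
separated by a finite-order separation. -/
def Aleph0Block {V : Type u} (G : SimpleGraph V) (K : Set V) : Prop :=
  K.Infinite ∧ FinInseparable G K ∧
    ∀ K' : Set V, K ⊆ K' → K'.Infinite → FinInseparable G K' → K' = K

/-- The join of two finite-order separations: `(A₁ ∪ A₂, B₁ ∩ B₂)`. -/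
def sepJoin {V : Type u} {G : SimpleGraph V} (s t : FinSep G) : FinSep G :=
  ⟨⟨s.1.A ∪ t.1.A, s.1.B ∩ t.1.B,
    by
      apply Set.eq_univ_of_forall
      intro x
      by_cases hs : x ∈ s.1.A
      · exact Or.inl (Or.inl hs)
      · by_cases ht : x ∈ t.1.A
        · exact Or.inl (Or.inr ht)
        · have hsB : x ∈ s.1.A ∪ s.1.B := s.1.union_eq.symm ▸ Set.mem_univ x
          have htB : x ∈ t.1.A ∪ t.1.B := t.1.union_eq.symm ▸ Set.mem_univ x
          exact Or.inr ⟨hsB.resolve_left hs, htB.resolve_left ht⟩,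
    by
      rintro a ⟨_, haB⟩ b ⟨⟨hbs, hbt⟩, hbA⟩
      rw [Set.mem_inter_iff, not_and_or] at haB
      rcases haB with h | h
      · have haA : a ∈ s.1.A ∪ s.1.B := s.1.union_eq.symm ▸ Set.mem_univ a
        exact s.1.no_edge a ⟨haA.resolve_right h, h⟩ b
          ⟨hbs, fun hb => hbA (Or.inl hb)⟩
      · have haA : a ∈ t.1.A ∪ t.1.B := t.1.union_eq.symm ▸ Set.mem_univ a
        exact t.1.no_edge a ⟨haA.resolve_right h, h⟩ b
          ⟨hbt, fun hb => hbA (Or.inr hb)⟩⟩,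
   by
    apply Set.Finite.subset (s.2.union t.2)
    rintro x ⟨hA, hBs, hBt⟩
    rcases hA with h | h
    · exact Or.inl ⟨h, hBs⟩
    · exact Or.inr ⟨h, hBt⟩⟩

lemma sepJoin_mem_endTangle {V : Type u} {G : SimpleGraph V} {ω : GraphEnd G}
    {s t : FinSep G} (hs : s ∈ endTangle ω) (ht : t ∈ endTangle ω) :
    sepJoin s t ∈ endTangle ω := by
  intro R hR
  obtain ⟨N1, h1⟩ := hs R hR
  obtain ⟨N2, h2⟩ := ht R hR
  exact ⟨max N1 N2, fun n hn =>
    ⟨h1 n (le_trans (le_max_left _ _) hn), h2 n (le_trans (le_max_right _ _) hn)⟩⟩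

/-- Extending the `A`-side of a separation by a finite subset of `B`. -/
def sepExtend {V : Type u} {G : SimpleGraph V} (t : FinSep G) (X : Set V)
    (hXB : X ⊆ t.1.B) (hXf : X.Finite) : FinSep G :=
  ⟨⟨t.1.A ∪ X, t.1.B,
    by
      apply Set.eq_univ_of_forall
      intro x
      have : x ∈ t.1.A ∪ t.1.B := t.1.union_eq.symm ▸ Set.mem_univ x
      rcases this with h | h
      · exact Or.inl (Or.inl h)
      · exact Or.inr h,
    by
      rintro a ⟨haA, haB⟩ b ⟨hbB, hbA⟩
      rcases haA with h | h
      · exact t.1.no_edge a ⟨h, haB⟩ b ⟨hbB, fun hb => hbA (Or.inl hb)⟩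
      · exact absurd (hXB h) haB⟩,
   by
    apply Set.Finite.subset (t.2.union hXf)
    rintro x ⟨hA, hB⟩
    rcases hA with h | h
    · exact Or.inl ⟨h, hB⟩
    · exact Or.inr h⟩

lemma sepExtend_mem_endTangle {V : Type u} {G : SimpleGraph V} {ω : GraphEnd G}
    {t : FinSep G} {X : Set V} (hXB : X ⊆ t.1.B) (hXf : X.Finite)
    (ht : t ∈ endTangle ω) : sepExtend t X hXB hXf ∈ endTangle ω := ht

lemma agree_mono {α : Type u} {A A' Z Z' : Set α} (hZ : Z ⊆ Z')
    (h : A ∩ Z' = A' ∩ Z') : A ∩ Z = A' ∩ Z := by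
  ext x
  constructor
  · rintro ⟨hx, hxZ⟩
    have hx' : x ∈ A' ∩ Z' := h ▸ (⟨hx, hZ hxZ⟩ : x ∈ A ∩ Z')
    exact ⟨hx'.1, hxZ⟩
  · rintro ⟨hx, hxZ⟩
    have hx' : x ∈ A ∩ Z' := h.symm ▸ (⟨hx, hZ hxZ⟩ : x ∈ A' ∩ Z')
    exact ⟨hx'.1, hxZ⟩

/-- if `K = ⋂ {B : (A,B) ∈ τ}` is finite for an end tangle `τ`,
then `τ` is not closed: `(V,K) ∉ τ` but `(V,K)` agrees on every finite `Z`
with some member of `τ`. -/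
theorem kernel_finite_not_closed {V : Type u} (G : SimpleGraph V) (ω : GraphEnd G)
    (K : Set V) (hK : K = ⋂ s ∈ endTangle ω, s.1.B) (hfin : K.Finite) :
    ¬ IsClosed (endTangle ω) ∧
    ∀ s : FinSep G, s.1.A = Set.univ → s.1.B = K →
      s ∉ endTangle ω ∧
      ∀ Z : Set V, Z.Finite → ∃ t ∈ endTangle ω,
        t.1.A ∩ Z = s.1.A ∩ Z ∧ t.1.B ∩ Z = s.1.B ∩ Z := by
  classical
  obtain ⟨R0, hR0⟩ := ω.nonempty
  -- K is contained in every B of the tangle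
  have hKsub : ∀ t ∈ endTangle ω, K ⊆ t.1.B := by
    intro t ht
    rw [hK]
    exact Set.biInter_subset_of_mem ht
  -- the tangle is nonempty
  have hne : (endTangle ω).Nonempty := by
    by_contra h
    rw [Set.not_nonempty_iff_eq_empty] at h
    have hKuniv : K = Set.univ := by
      rw [hK]
      apply Set.eq_univ_of_forall
      intro x
      rw [Set.mem_iInter₂]
      intro s hs
      exact absurd hs (by rw [h]; exact Set.notMem_empty s)
    have : K.Infinite :=
      Set.infinite_of_injective_forall_mem R0.inj
        (fun n => hKuniv ▸ Set.mem_univ (R0.f n))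
    exact this hfin
  -- main construction: t ∈ τ with B ∩ Z ⊆ K
  have main : ∀ Z : Set V, Z.Finite → ∃ t ∈ endTangle ω, t.1.B ∩ Z ⊆ K := by
    intro Z hZ
    refine Set.Finite.induction_on
      (motive := fun Z _ => ∃ t ∈ endTangle ω, t.1.B ∩ Z ⊆ K) Z hZ ?_ ?_
    · obtain ⟨t, ht⟩ := hne
      exact ⟨t, ht, by simp⟩
    · intro v Z' _ hZ'fin ih
      obtain ⟨t, ht, htsub⟩ := ih
      by_cases hvK : v ∈ K
      · refine ⟨t, ht, ?_⟩
        rintro x ⟨hxB, hxZ⟩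
        rcases hxZ with rfl | hx
        · exact hvK
        · exact htsub ⟨hxB, hx⟩
      · have hu : ∃ u ∈ endTangle ω, v ∉ u.1.B := by
          by_contra h
          push_neg at h
          exact hvK (hK ▸ Set.mem_iInter₂.mpr h)
        obtain ⟨u, hu, hvu⟩ := hu
        refine ⟨sepJoin t u, sepJoin_mem_endTangle ht hu, ?_⟩
        rintro x ⟨⟨hxt, hxu⟩, hxZ⟩
        rcases hxZ with rfl | hx
        · exact absurd hxu hvu
        · exact htsub ⟨hxt, hx⟩
  -- part 2 of the theorem
  have part2 : ∀ s : FinSep G, s.1.A = Set.univ → s.1.B = K →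
      s ∉ endTangle ω ∧
      ∀ Z : Set V, Z.Finite → ∃ t ∈ endTangle ω,
        t.1.A ∩ Z = s.1.A ∩ Z ∧ t.1.B ∩ Z = s.1.B ∩ Z := by
    intro s hA hB
    constructor
    · intro hs
      obtain ⟨N, hN⟩ := hs R0 hR0
      have : K.Infinite := by
        apply Set.infinite_of_injective_forall_mem
          (f := fun n : ℕ => R0.f (n + N))
        · intro a b hab
          have := R0.inj hab
          omega
        · intro n
          exact hB ▸ hN (n + N) (Nat.le_add_left N n)
      exact this hfin
    · intro Z hZ
      obtain ⟨t, ht, htsub⟩ := main Z hZ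
      have hKZ : K ∩ Z ⊆ t.1.B := Set.inter_subset_left.trans (hKsub t ht)
      refine ⟨sepExtend t (K ∩ Z) hKZ (hfin.inter_of_left Z),
        sepExtend_mem_endTangle hKZ (hfin.inter_of_left Z) ht, ?_, ?_⟩
      · -- A-side agreement
        rw [hA, Set.univ_inter]
        apply Set.eq_of_subset_of_subset Set.inter_subset_right
        intro z hz
        refine ⟨?_, hz⟩
        by_cases hzK : z ∈ K
        · exact Or.inr ⟨hzK, hz⟩
        · have hzB : z ∉ t.1.B := fun hzB => hzK (htsub ⟨hzB, hz⟩)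
          have : z ∈ t.1.A ∪ t.1.B := t.1.union_eq.symm ▸ Set.mem_univ z
          exact Or.inl (this.resolve_right hzB)
      · -- B-side agreement
        rw [hB]
        apply Set.eq_of_subset_of_subset
        · rintro x ⟨hxB, hxZ⟩
          exact ⟨htsub ⟨hxB, hxZ⟩, hxZ⟩
        · rintro x ⟨hxK, hxZ⟩
          exact ⟨hKZ ⟨hxK, hxZ⟩, hxZ⟩
  refine ⟨?_, part2⟩
  -- not closed
  intro hcl
  have hs0B : (Set.univ ∩ K).Finite := by simpa using hfin
  set s0 : FinSep G :=
    ⟨⟨Set.univ, K, Set.univ_union K,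
      fun a _ b hb => absurd (Set.mem_univ b) hb.2⟩, hs0B⟩ with hs0def
  obtain ⟨hs0not, hs0agree⟩ := part2 s0 rfl rfl
  have hopen : IsOpen (endTangle ω)ᶜ := hcl.isOpen_compl
  have key : ∀ U : Set (FinSep G),
      TopologicalSpace.GenerateOpen
        {O | ∃ Z AZ BZ : Set V, Z.Finite ∧
          O = {s : FinSep G | s.1.A ∩ Z = AZ ∧ s.1.B ∩ Z = BZ}} U →
      s0 ∈ U →
      ∃ Z : Set V, Z.Finite ∧ ∀ t : FinSep G,
        t.1.A ∩ Z = s0.1.A ∩ Z → t.1.B ∩ Z = s0.1.B ∩ Z → t ∈ U := by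
    intro U hU
    induction hU with
    | basic U hUb =>
      obtain ⟨Z, AZ, BZ, hZfin, rfl⟩ := hUb
      intro hs0
      exact ⟨Z, hZfin, fun t h1 h2 => ⟨h1.trans hs0.1, h2.trans hs0.2⟩⟩
    | univ =>
      intro _
      exact ⟨∅, Set.finite_empty, fun t _ _ => Set.mem_univ t⟩
    | inter U1 U2 _ _ ih1 ih2 =>
      intro hs0
      obtain ⟨Z1, hZ1, h1⟩ := ih1 hs0.1
      obtain ⟨Z2, hZ2, h2⟩ := ih2 hs0.2
      refine ⟨Z1 ∪ Z2, hZ1.union hZ2, fun t hA hB => ?_⟩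
      exact ⟨h1 t (agree_mono Set.subset_union_left hA)
              (agree_mono Set.subset_union_left hB),
             h2 t (agree_mono Set.subset_union_right hA)
              (agree_mono Set.subset_union_right hB)⟩
    | sUnion S _ ih =>
      intro hs0
      obtain ⟨U, hUS, hs0U⟩ := hs0
      obtain ⟨Z, hZfin, hZ⟩ := ih U hUS hs0U
      exact ⟨Z, hZfin, fun t hA hB => ⟨U, hUS, hZ t hA hB⟩⟩
  obtain ⟨Z, hZfin, hZ⟩ := key (endTangle ω)ᶜ hopen hs0not
  obtain ⟨t, ht, htA, htB⟩ := hs0agree Z hZfin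
  exact hZ t htA htB ht
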